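/- Let κ be a positive integer, s real, and ψ a real function with lim_{N→∞} ψ(N) = a. Set φ_κ^s(N) = κ + s/N^κ. Then for every real z, lim_{N→∞} R_κ^{-φ_κ^s(N), -ψ(N), ψ(N)+φ_κ^s(N)+N}(z) = (κ-1)!·s + λ_κ^{-κ-a}(z). -/

import Mathlib

open Filter Topology Finset

/-- Generalized binomial coefficient C(y, k) = y(y-1)⋯(y-k+1)/k!. -/
noncomputable def gbinom (y : ℝ) (k : ℕ) : ℝ :=
  (∏ i ∈ Finset.range k, (y - i)) / (Nat.factorial k)

/-- Pochhammer symbol (y)_k = y(y+1)⋯(y+k-1). -/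
noncomputable def poch (y : ℝ) (k : ℕ) : ℝ :=
  ∏ i ∈ Finset.range k, (y + i)

/-- λ_j^u(y) = ∏_{i=0}^{j-1} (y - i(u+i+1)). -/
noncomputable def lam (j : ℕ) (u y : ℝ) : ℝ :=
  ∏ i ∈ Finset.range j, (y - i * (u + i + 1))

/-- θ_x^u = x(x+u+1). -/
noncomputable def theta (x u : ℝ) : ℝ := x * (x + u + 1)

/-- Dual Hahn polynomial R_n^{a,b,N}(x). -/
noncomputable def dualHahn (n : ℕ) (a b N x : ℝ) : ℝ :=
  ∑ j ∈ Finset.range (n + 1),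
    (poch (-(n : ℝ)) j * poch (-N + j) (n - j) * poch (a + j + 1) (n - j) /
      ((-1) ^ j * (Nat.factorial j))) * lam j (a + b) x

lemma poch_zero' (y : ℝ) : poch y 0 = 1 := by simp [poch]

lemma poch_neg_nat (n : ℕ) : poch (-(n:ℝ)) n = (-1)^n * n.factorial := by
  unfold poch
  rw [← Finset.prod_range_reflect]
  have : ∀ i ∈ Finset.range n, (-(n:ℝ) + (n - 1 - i : ℕ)) = -((i:ℝ)+1) := by
    intro i hi
    have := Finset.mem_range.mp hi
    push_cast [Nat.cast_sub (by omega : i ≤ n - 1), Nat.cast_sub (by omega : 1 ≤ n)]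
    ring
  rw [Finset.prod_congr rfl this]
  simp_rw [neg_eq_neg_one_mul ((_:ℝ)+1)]
  rw [Finset.prod_mul_distrib, Finset.prod_const]
  congr 1
  · simp
  · calc (∏ x ∈ Finset.range n, ((x:ℝ) + 1))
        = ((∏ x ∈ Finset.range n, (x+1) : ℕ) : ℝ) := by
          push_cast; exact Finset.prod_congr rfl fun i _ => by ring
      _ = n.factorial := by rw [Finset.prod_range_add_one_eq_factorial n]

lemma lam_cont (j : ℕ) (z : ℝ) : Continuous fun u : ℝ => lam j u z := by
  unfold lam; fun_prop

lemma factor_lim (κ : ℕ) (hκ : 0 < κ) (s a c : ℝ) (ψ : ℝ → ℝ) (hψ : Tendsto ψ atTop (𝓝 a)) :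
    Tendsto (fun N : ℝ => (-(ψ N + ((κ:ℝ) + s / N ^ κ) + N) + c) / N) atTop (𝓝 (-1)) := by
  have hε : Tendsto (fun N : ℝ => s / N^κ) atTop (𝓝 0) := by
    have h : Tendsto (fun N : ℝ => (N^κ)⁻¹) atTop (𝓝 0) :=
      (tendsto_pow_atTop hκ.ne').inv_tendsto_atTop
    simpa [div_eq_mul_inv] using h.const_mul s
  have hnum : Tendsto (fun N : ℝ => (-(ψ N) - (κ:ℝ) - s / N^κ + c)) atTop (𝓝 (-a - κ - 0 + c)) :=
    (((hψ.neg.sub_const _).sub hε).add_const _)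
  have h2 : Tendsto (fun N : ℝ => (-(ψ N) - (κ:ℝ) - s / N^κ + c) * N⁻¹ - 1) atTop
      (𝓝 ((-a - κ - 0 + c) * 0 - 1)) := (hnum.mul tendsto_inv_atTop_zero).sub_const 1
  rw [show ((-a - (κ:ℝ) - 0 + c) * 0 - 1) = -1 by ring] at h2
  refine h2.congr' ?_
  filter_upwards [eventually_gt_atTop (0:ℝ)] with N hN
  field_simp
  ring

set_option maxHeartbeats 2000000 in
theorem stmt16 (κ : ℕ) (hκ : 0 < κ) (s a : ℝ) (ψ : ℝ → ℝ)
    (hψ : Tendsto ψ atTop (𝓝 a)) (z : ℝ) :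
    Tendsto
      (fun N : ℝ =>
        dualHahn κ (-((κ : ℝ) + s / N ^ κ)) (-(ψ N))
          (ψ N + ((κ : ℝ) + s / N ^ κ) + N) z)
      atTop (𝓝 ((Nat.factorial (κ - 1)) * s + lam κ (-(κ : ℝ) - a) z)) := by
  have hε : Tendsto (fun N : ℝ => s / N^κ) atTop (𝓝 0) := by
    have h : Tendsto (fun N : ℝ => (N^κ)⁻¹) atTop (𝓝 0) :=
      (tendsto_pow_atTop hκ.ne').inv_tendsto_atTop
    simpa [div_eq_mul_inv] using h.const_mul s
  have hu : Tendsto (fun N : ℝ => -((κ:ℝ) + s / N ^ κ) + -(ψ N)) atTop (𝓝 (-(κ:ℝ) - a)) := by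
    have := (((tendsto_const_nhds : Tendsto (fun _ : ℝ => (κ:ℝ)) atTop (𝓝 (κ:ℝ))).add hε).neg).add hψ.neg
    rw [show -((κ:ℝ) + 0) + -a = -(κ:ℝ) - a by ring] at this
    exact this
  have hlam : ∀ j : ℕ, Tendsto (fun N : ℝ => lam j (-((κ:ℝ) + s / N ^ κ) + -(ψ N)) z)
      atTop (𝓝 (lam j (-(κ:ℝ) - a) z)) := fun j => ((lam_cont j z).tendsto _).comp hu
  -- limit of each summand
  set L : ℕ → ℝ := fun j =>
    if j = κ then lam κ (-(κ:ℝ) - a) z else if j = 0 then (Nat.factorial (κ-1)) * s else 0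
    with hL
  have key : ∀ j ∈ Finset.range (κ+1),
      Tendsto (fun N : ℝ =>
        (poch (-(κ : ℝ)) j * poch (-(ψ N + ((κ:ℝ) + s / N ^ κ) + N) + j) (κ - j) *
          poch (-((κ:ℝ) + s / N ^ κ) + j + 1) (κ - j) / ((-1) ^ j * (Nat.factorial j))) *
          lam j (-((κ:ℝ) + s / N ^ κ) + -(ψ N)) z) atTop (𝓝 (L j)) := by
    intro j hj
    have hjκ := Finset.mem_range.mp hj
    by_cases hcase : j = κ
    · subst hcase
      simp only [Nat.sub_self, poch_zero', mul_one]
      have hc : poch (-(j:ℝ)) j / ((-1:ℝ)^j * (Nat.factorial j)) = 1 := by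
        rw [poch_neg_nat]
        have h1 : ((-1:ℝ))^j ≠ 0 := by positivity
        have h2 : ((Nat.factorial j : ℝ)) ≠ 0 := by positivity
        field_simp
      simp only [hc, one_mul, hL, if_pos rfl]
      exact hlam j
    · -- j < κ
      have hjlt : j < κ := by omega
      set m : ℕ := κ - j with hm
      have hm1 : 1 ≤ m := by omega
      set Q' : ℝ → ℝ := fun N => ∏ i ∈ Finset.range (m-1), (-((κ:ℝ) + s / N ^ κ) + j + 1 + i)
        with hQ'def
      set C : ℝ := poch (-(κ : ℝ)) j / ((-1) ^ j * (Nat.factorial j)) with hC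
      -- eventual factored form
      have hEq : ∀ᶠ N : ℝ in atTop,
          (poch (-(κ : ℝ)) j * poch (-(ψ N + ((κ:ℝ) + s / N ^ κ) + N) + j) m *
            poch (-((κ:ℝ) + s / N ^ κ) + j + 1) m / ((-1) ^ j * (Nat.factorial j))) *
            lam j (-((κ:ℝ) + s / N ^ κ) + -(ψ N)) z
          = C * (∏ i ∈ Finset.range m, ((-(ψ N + ((κ:ℝ) + s / N ^ κ) + N) + j + i) / N)) *
              Q' N * (-s) * (N⁻¹)^j *
              lam j (-((κ:ℝ) + s / N ^ κ) + -(ψ N)) z := by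
        filter_upwards [eventually_gt_atTop (0:ℝ)] with N hN
        have hNne : N ≠ 0 := hN.ne'
        have hsplit : poch (-((κ:ℝ) + s / N ^ κ) + j + 1) m = Q' N * (-(s / N ^ κ)) := by
          rw [hQ'def]
          unfold poch
          rw [show m = (m-1)+1 by omega, Finset.prod_range_succ]
          congr 1
          have : ((m-1 : ℕ) : ℝ) = (κ:ℝ) - j - 1 := by
            rw [Nat.cast_sub hm1, hm, Nat.cast_sub hjlt.le]; push_cast; ring
          rw [this]; ring
        have hprodP : (∏ i ∈ Finset.range m, ((-(ψ N + ((κ:ℝ) + s / N ^ κ) + N) + j + i) / N))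
            = poch (-(ψ N + ((κ:ℝ) + s / N ^ κ) + N) + j) m / N ^ m := by
          unfold poch
          rw [Finset.prod_div_distrib, Finset.prod_const, Finset.card_range]
        have hpow : (N:ℝ) ^ κ = N ^ j * N ^ m := by
          rw [← pow_add]; congr 1; omega
        rw [hsplit, hprodP, hC]
        have hNm : (N:ℝ)^m ≠ 0 := pow_ne_zero _ hNne
        have hNj : (N:ℝ)^j ≠ 0 := pow_ne_zero _ hNne
        have hNκ : (N:ℝ)^κ ≠ 0 := pow_ne_zero _ hNne
        have hfac : ((-1:ℝ)^j * ((Nat.factorial j : ℕ) : ℝ)) ≠ 0 := by positivity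
        set A := poch (-(κ : ℝ)) j with hA
        set P := poch (-(ψ N + ((κ:ℝ) + s / N ^ κ) + N) + (j:ℝ)) m with hP
        set lv := lam j (-((κ:ℝ) + s / N ^ κ) + -(ψ N)) z with hlv
        set QQ := Q' N with hQQ
        set D := ((-1:ℝ)^j * ((Nat.factorial j : ℕ) : ℝ)) with hD
        rw [div_eq_mul_inv A D, div_eq_mul_inv _ D, div_eq_mul_inv P,
          div_eq_mul_inv s, hpow, mul_inv]
        ring
      -- limits of the factored pieces
      have hP : Tendsto (fun N : ℝ =>
          ∏ i ∈ Finset.range m, ((-(ψ N + ((κ:ℝ) + s / N ^ κ) + N) + j + i) / N)) atTop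
          (𝓝 ((-1:ℝ)^m)) := by
        have : ((-1:ℝ)^m) = ∏ _i ∈ Finset.range m, (-1:ℝ) := by simp
        rw [this]
        refine tendsto_finset_prod _ fun i _ => ?_
        have := factor_lim κ hκ s a ((j:ℝ) + i) ψ hψ
        exact this.congr fun N => by ring_nf
      have hQ : Tendsto Q' atTop
          (𝓝 (∏ i ∈ Finset.range (m-1), (-((κ:ℝ) + 0) + j + 1 + i))) := by
        refine tendsto_finset_prod _ fun i _ => ?_
        exact (((tendsto_const_nhds.add hε).neg.add_const ((j:ℝ))).add_const 1).add_const (i:ℝ)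
      have hNj : Tendsto (fun N : ℝ => ((N:ℝ)⁻¹)^j) atTop (𝓝 ((0:ℝ)^j)) :=
        tendsto_inv_atTop_zero.pow j
      have hall : Tendsto (fun N : ℝ =>
          C * (∏ i ∈ Finset.range m, ((-(ψ N + ((κ:ℝ) + s / N ^ κ) + N) + j + i) / N)) *
            Q' N * (-s) * (N⁻¹)^j * lam j (-((κ:ℝ) + s / N ^ κ) + -(ψ N)) z) atTop
          (𝓝 (C * ((-1:ℝ)^m) * (∏ i ∈ Finset.range (m-1), (-((κ:ℝ) + 0) + j + 1 + i)) *
            (-s) * ((0:ℝ)^j) * lam j (-(κ:ℝ) - a) z)) := by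
        exact (((((tendsto_const_nhds.mul hP).mul hQ).mul tendsto_const_nhds).mul hNj).mul
          (hlam j))
      have hval : C * ((-1:ℝ)^m) * (∏ i ∈ Finset.range (m-1), (-((κ:ℝ) + 0) + j + 1 + i)) *
            (-s) * ((0:ℝ)^j) * lam j (-(κ:ℝ) - a) z = L j := by
        by_cases hj0 : j = 0
        · subst hj0
          have hCval : C = 1 := by
            rw [hC]; simp [poch_zero']
          have hmval : m = κ := by omega
          have hQval : (∏ i ∈ Finset.range (m-1), (-((κ:ℝ) + 0) + (0:ℕ) + 1 + i))
              = (-1:ℝ)^(κ-1) * (Nat.factorial (κ-1)) := by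
            rw [← poch_neg_nat (κ-1)]
            unfold poch
            refine Finset.prod_congr (by rw [hmval]) fun i _ => ?_
            have : ((κ-1 : ℕ) : ℝ) = (κ:ℝ) - 1 := by
              push_cast [Nat.cast_sub hκ]; ring
            rw [this]; push_cast; ring
          rw [hCval, hQval, hmval]
          have hlam0 : lam 0 (-(κ:ℝ) - a) z = 1 := by simp [lam]
          rw [hlam0, hL]
          simp only [if_neg (by omega : (0:ℕ) ≠ κ), if_pos rfl]
          have : (-1:ℝ)^κ = (-1:ℝ)^(κ-1) * (-1) := by
            rw [← pow_succ]; congr 1; omega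
          rw [this]
          ring_nf
          rw [pow_mul]
          norm_num
          rw [← pow_mul, mul_comm (κ-1) 2, pow_mul]
          norm_num
        · have : ((0:ℝ))^j = 0 := by
            exact zero_pow hj0
          rw [this, hL]
          simp only [if_neg hcase, if_neg hj0]
          ring
      rw [← hval]
      exact hall.congr' (Filter.EventuallyEq.symm hEq)
  have hsum := tendsto_finset_sum _ key
  have hLsum : (∑ j ∈ Finset.range (κ+1), L j)
      = (Nat.factorial (κ - 1)) * s + lam κ (-(κ : ℝ) - a) z := by
    rw [Finset.sum_range_succ]
    have h1 : ∀ j ∈ Finset.range κ, L j = if j = 0 then (Nat.factorial (κ-1)) * s else 0 := by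
      intro j hj
      have := Finset.mem_range.mp hj
      rw [hL]
      simp only [if_neg (by omega : j ≠ κ)]
    rw [Finset.sum_congr rfl h1]
    rw [Finset.sum_ite_eq' (Finset.range κ) 0 (fun _ => (Nat.factorial (κ-1)) * s)]
    simp [hL, hκ]
  rw [← hLsum]
  unfold dualHahn
  exact hsum
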